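/- Let (Σ ⊂ ℝ^n, μ) be a compact measure space admitting a t-design curve α, reparameterized with constant speed. Then the curve γ: [0,1] → Σ × S^1 ⊂ ℝ^{n+2} defined by γ(s) = (α((t+1)s - ⌊(t+1)s⌋), cos 2πs, sin 2πs) is a t-design curve on (Σ × S^1, μ × σ), where σ is the arc-length measure on S^1: the normalized line integral of γ applied to any polynomial on ℝ^{n+2} of degree at most t equals its μ × σ-average over Σ × S^1. -/

import Mathlib

open Real MvPolynomial MeasureTheory

/-- The product curve `γ(s) = (α((t+1)s - ⌊(t+1)s⌋), cos 2πs, sin 2πs)` in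
`ℝ^n × ℝ² = ℝ^{n+2}`. -/
noncomputable def productCurve (n t : ℕ) (α : ℝ → EuclideanSpace ℝ (Fin n)) (s : ℝ) :
    EuclideanSpace ℝ (Fin n ⊕ Fin 2) :=
  (WithLp.equiv 2 (Fin n ⊕ Fin 2 → ℝ)).symm
    (Sum.elim (WithLp.equiv 2 (Fin n → ℝ) (α (Int.fract ((t + 1 : ℝ) * s))))
      ![Real.cos (2 * π * s), Real.sin (2 * π * s)])

noncomputable section DesignAux

open Finset

/-! ### Exponential quadrature -/

lemma two_pi_c_ne : (2 * π : ℂ) ≠ 0 := by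
  simp [Complex.ext_iff, pi_ne_zero]

lemma integral_exp_int (m : ℤ) :
    (2 * π : ℂ)⁻¹ * ∫ θ in (0:ℝ)..(2*π), Complex.exp (m * θ * Complex.I) =
      if m = 0 then 1 else 0 := by
  have h1 : Complex.exp ((m:ℂ) * Complex.I * (2*π:ℝ)) = 1 := by
    have := Complex.exp_int_mul_two_pi_mul_I m
    rw [← this]; congr 1; push_cast; ring
  rcases eq_or_ne m 0 with hm | hm
  · subst hm
    simp only [Int.cast_zero, zero_mul, Complex.exp_zero, if_pos rfl]
    rw [intervalIntegral.integral_const]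
    have h2 := two_pi_c_ne
    field_simp
    simp
  · rw [if_neg hm]
    have hc : (m : ℂ) * Complex.I ≠ 0 := by
      simp [Complex.I_ne_zero, hm]
    have h2 : ∫ θ in (0:ℝ)..(2*π), Complex.exp (m * θ * Complex.I)
        = ∫ θ in (0:ℝ)..(2*π), Complex.exp ((m * Complex.I) * θ) := by
      congr 1; ext θ; ring_nf
    rw [h2, integral_exp_mul_complex hc, h1]
    simp

/-- equispaced-average of exp(m θ i), normalized. -/
lemma sum_exp_int (t : ℕ) (m : ℤ) (hm : m.natAbs ≤ t) (u : ℝ) :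
    ((t:ℂ) + 1)⁻¹ * ∑ k ∈ range (t+1),
        Complex.exp (m * (2 * π * ((u + k) / (t+1))) * Complex.I) =
      if m = 0 then 1 else 0 := by
  have ht : ((t:ℂ) + 1) ≠ 0 := Nat.cast_add_one_ne_zero t
  rcases eq_or_ne m 0 with hm0 | hm0
  · subst hm0; simp [ht]
  · rw [if_neg hm0]
    set z : ℂ := Complex.exp ((m:ℂ) * (2 * π / (t+1)) * Complex.I) with hz
    have hterm : ∀ k ∈ range (t+1),
        Complex.exp (m * (2 * π * ((u + k) / (t+1))) * Complex.I)
          = Complex.exp ((m:ℂ) * (2 * π * (u / (t+1))) * Complex.I) * z ^ k := by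
      intro k _
      rw [hz, ← Complex.exp_nat_mul, ← Complex.exp_add]
      congr 1
      push_cast; ring
    rw [Finset.sum_congr rfl hterm, ← Finset.mul_sum]
    have hz1 : z ≠ 1 := by
      intro h
      rw [hz, Complex.exp_eq_one_iff] at h
      obtain ⟨k, hk⟩ := h
      have hπ : (π:ℂ) ≠ 0 := by exact_mod_cast pi_ne_zero
      have hI := Complex.I_ne_zero
      have hcast : (m : ℂ) = k * (t+1) := by
        field_simp at hk
        have h4 : (m:ℂ) * ((2 * π) * Complex.I) = (k * (t+1)) * ((2 * π) * Complex.I) := by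
          rw [show (m:ℂ) * ((2*π) * Complex.I) = (m:ℂ) * (2*π) * Complex.I by ring, hk]; ring
        have h5 : (2 * (π:ℂ)) * Complex.I ≠ 0 := mul_ne_zero two_pi_c_ne hI
        exact mul_right_cancel₀ h5 h4
      have hmk : m = k * ((t:ℤ)+1) := by exact_mod_cast hcast
      rcases eq_or_ne k 0 with h0 | h0
      · simp [h0] at hmk; exact hm0 hmk
      · have h3 : m.natAbs = k.natAbs * (t+1) := by
          rw [hmk, Int.natAbs_mul]
          have : ((t:ℤ)+1).natAbs = t + 1 := by omega
          rw [this]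
        have : t + 1 ≤ m.natAbs := by
          rw [h3]
          exact Nat.le_mul_of_pos_left _ (Int.natAbs_pos.mpr h0)
        omega
    have hgeom : ∑ k ∈ range (t+1), z ^ k = (z ^ (t+1) - 1)/(z - 1) :=
      geom_sum_eq hz1 _
    have hzt : z ^ (t+1) = 1 := by
      rw [hz, ← Complex.exp_nat_mul]
      refine (congrArg Complex.exp ?_).trans (Complex.exp_int_mul_two_pi_mul_I m)
      push_cast
      field_simp
    rw [hgeom, hzt]
    simp

lemma cos_sin_pow_expand (a b : ℕ) (θ : ℝ) :
    ((Real.cos θ : ℂ))^a * ((Real.sin θ : ℂ))^b =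
      ∑ j ∈ range (a+1), ∑ l ∈ range (b+1),
        ((a.choose j : ℂ) * (b.choose l) * (-1)^(l+b) / (2^a * (2*Complex.I)^b)) *
          Complex.exp (((2*(j+l) - (a+b) : ℤ) : ℂ) * θ * Complex.I) := by
  set e : ℤ → ℂ := fun m => Complex.exp (m * θ * Complex.I) with he
  have hmul : ∀ m m' : ℤ, e m * e m' = e (m + m') := by
    intro m m'
    simp only [he, ← Complex.exp_add]
    congr 1; push_cast; ring
  have hpow : ∀ (m : ℤ) (k : ℕ), e m ^ k = e (k * m) := by
    intro m k
    simp only [he, ← Complex.exp_nat_mul]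
    congr 1; push_cast; ring
  have h1 : Complex.exp ((θ:ℂ) * Complex.I) = Real.cos θ + Real.sin θ * Complex.I := by
    rw [Complex.exp_mul_I, Complex.ofReal_cos, Complex.ofReal_sin]
  have h1' : Complex.exp (-(θ:ℂ) * Complex.I) = Real.cos θ - Real.sin θ * Complex.I := by
    rw [Complex.exp_mul_I, Complex.cos_neg, Complex.sin_neg, Complex.ofReal_cos,
      Complex.ofReal_sin]
    ring
  have he1 : e 1 = Real.cos θ + Real.sin θ * Complex.I := by
    rw [he]; simpa using h1
  have hem1 : e (-1) = Real.cos θ - Real.sin θ * Complex.I := by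
    rw [he]; simp only [Int.cast_neg, Int.cast_one]; rw [← h1']; congr 1; ring
  have hcos : ((Real.cos θ : ℂ)) = (e 1 + e (-1)) / 2 := by
    rw [he1, hem1]; ring
  have hsin : ((Real.sin θ : ℂ)) = (e 1 - e (-1)) / (2 * Complex.I) := by
    rw [he1, hem1]
    field_simp [Complex.I_ne_zero]
    ring_nf
  have hca : ((Real.cos θ:ℂ))^a
      = (∑ j ∈ range (a+1), (a.choose j : ℂ) * e ((2*j : ℤ) - a)) / 2^a := by
    rw [hcos, div_pow, add_pow]
    congr 1
    refine Finset.sum_congr rfl fun j hj => ?_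
    rw [mem_range] at hj
    rw [hpow, hpow, hmul]
    have : (j:ℤ) * 1 + (a - j : ℕ) * (-1) = 2*j - a := by
      have : j ≤ a := by omega
      push_cast [this]; ring
    rw [this]; ring
  have hsb : ((Real.sin θ:ℂ))^b
      = (∑ l ∈ range (b+1), (-1 : ℂ)^(l+b) * (b.choose l) * e ((2*l : ℤ) - b))
          / (2*Complex.I)^b := by
    rw [hsin, div_pow, sub_pow]
    congr 1
    refine Finset.sum_congr rfl fun l hl => ?_
    rw [mem_range] at hl
    rw [hpow, hpow, mul_assoc ((-1:ℂ)^(l+b)), hmul]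
    have : (l:ℤ) * 1 + (b - l : ℕ) * (-1) = 2*l - b := by
      have : l ≤ b := by omega
      push_cast [this]; ring
    rw [this]; ring
  rw [hca, hsb, div_mul_div_comm, Finset.sum_mul_sum, Finset.sum_div]
  refine Finset.sum_congr rfl fun j _ => ?_
  rw [Finset.sum_div]
  refine Finset.sum_congr rfl fun l _ => ?_
  have hcomb : e ((2*j:ℤ) - a) * e ((2*l:ℤ) - b) = e (2*(j+l) - (a+b) : ℤ) := by
    rw [hmul]; congr 1; push_cast; ring
  have hcomb' := hcomb
  simp only [he] at hcomb'
  rw [← hcomb']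
  simp only [he]
  ring

lemma sum_exp_int' (t : ℕ) (m : ℤ) (hm : m.natAbs ≤ t) (u : ℝ) :
    ((t:ℂ) + 1)⁻¹ * ∑ k ∈ range (t+1),
        Complex.exp ((m:ℂ) * ((2 * π * ((u + k) / (t+1)) : ℝ) : ℂ) * Complex.I) =
      if m = 0 then 1 else 0 := by
  rw [← sum_exp_int t m hm u]
  congr 1
  refine Finset.sum_congr rfl fun k _ => ?_
  congr 1
  push_cast
  ring

lemma trig_quad (t a b : ℕ) (hab : a + b ≤ t) (u : ℝ) :
    ((t:ℝ)+1)⁻¹ * ∑ k ∈ range (t+1),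
        (Real.cos (2*π*((u+k)/(t+1))))^a * (Real.sin (2*π*((u+k)/(t+1))))^b
      = (2*π)⁻¹ * ∫ θ in (0:ℝ)..(2*π), (Real.cos θ)^a * (Real.sin θ)^b := by
  apply Complex.ofReal_injective
  simp only [Complex.ofReal_mul, Complex.ofReal_inv, Complex.ofReal_sum, Complex.ofReal_pow,
    Complex.ofReal_add, Complex.ofReal_natCast, Complex.ofReal_one, Complex.ofReal_ofNat,
    ← intervalIntegral.integral_ofReal]
  calc ((t:ℂ)+1)⁻¹ * ∑ k ∈ range (t+1),
        ((Real.cos (2*π*((u+k)/(t+1))) : ℂ))^a * ((Real.sin (2*π*((u+k)/(t+1))) : ℂ))^b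
      = ∑ j ∈ range (a+1), ∑ l ∈ range (b+1),
          ((a.choose j : ℂ) * (b.choose l) * (-1)^(l+b) / (2^a * (2*Complex.I)^b)) *
            (if (2*(j+l) - (a+b) : ℤ) = 0 then (1:ℂ) else 0) := by
        rw [Finset.sum_congr rfl (fun k _ => cos_sin_pow_expand a b _), Finset.sum_comm,
          Finset.mul_sum]
        refine Finset.sum_congr rfl fun j hj => ?_
        rw [Finset.sum_comm, Finset.mul_sum]
        refine Finset.sum_congr rfl fun l hl => ?_
        rw [mem_range] at hj hl
        have hnat : (2*(j+l) - (a+b) : ℤ).natAbs ≤ t := by omega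
        rw [← sum_exp_int' t _ hnat u, Finset.mul_sum, Finset.mul_sum, Finset.mul_sum,
          Finset.sum_congr rfl (fun k _ => by ring :
            ∀ k ∈ Finset.range (t+1), (↑t + 1)⁻¹ *
              (↑(a.choose j) * ↑(b.choose l) * (-1) ^ (l + b) / (2 ^ a * (2 * Complex.I) ^ b) *
                Complex.exp (↑(2 * (↑j + ↑l) - (↑a + ↑b) : ℤ) *
                  ↑(2 * π * ((u + ↑k) / (↑t + 1))) * Complex.I)) =
              ↑(a.choose j) * ↑(b.choose l) * (-1) ^ (l + b) / (2 ^ a * (2 * Complex.I) ^ b) *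
                ((↑t + 1)⁻¹ *
                  Complex.exp (↑(2 * (↑j + ↑l) - (↑a + ↑b) : ℤ) *
                    ↑(2 * π * ((u + ↑k) / (↑t + 1))) * Complex.I)))]
    _ = (2*(π:ℂ))⁻¹ * ∫ θ in (0:ℝ)..(2*π), ((Real.cos θ:ℂ))^a * ((Real.sin θ:ℂ))^b := by
        rw [intervalIntegral.integral_congr (g := fun θ =>
          ∑ j ∈ range (a+1), ∑ l ∈ range (b+1),
            ((a.choose j : ℂ) * (b.choose l) * (-1)^(l+b) / (2^a * (2*Complex.I)^b)) *
              Complex.exp (((2*(j+l) - (a+b) : ℤ) : ℂ) * θ * Complex.I))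
          (fun θ _ => cos_sin_pow_expand a b θ)]
        rw [intervalIntegral.integral_finset_sum]
        · rw [Finset.mul_sum]
          refine Finset.sum_congr rfl fun j hj => ?_
          rw [intervalIntegral.integral_finset_sum]
          · rw [Finset.mul_sum]
            refine Finset.sum_congr rfl fun l hl => ?_
            rw [← integral_exp_int (2*(j+l) - (a+b) : ℤ)]
            rw [intervalIntegral.integral_const_mul]
            ring
          · intro l _
            apply Continuous.intervalIntegrable
            fun_prop
        · intro j _
          apply Continuous.intervalIntegrable
          exact continuous_finset_sum _ fun l _ => by fun_prop

/-! ### The averaged polynomial -/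

def circCoeff (a b : ℕ) : ℝ :=
  (2*π)⁻¹ * ∫ θ in (0:ℝ)..(2*π), (Real.cos θ)^a * (Real.sin θ)^b

def avgPoly {n : ℕ} (f : MvPolynomial (Fin n ⊕ Fin 2) ℝ) : MvPolynomial (Fin n) ℝ :=
  ∑ d ∈ f.support, monomial (Finsupp.comapDomain Sum.inl d Sum.inl_injective.injOn)
    (coeff d f * circCoeff (d (Sum.inr 0)) (d (Sum.inr 1)))

lemma eval_sum_elim {n : ℕ} (f : MvPolynomial (Fin n ⊕ Fin 2) ℝ) (x : Fin n → ℝ) (c s : ℝ) :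
    eval (Sum.elim x ![c, s]) f =
      ∑ d ∈ f.support, coeff d f * ((∏ i : Fin n, x i ^ d (Sum.inl i)) *
        (c ^ d (Sum.inr 0) * s ^ d (Sum.inr 1))) := by
  rw [eval_eq']
  refine Finset.sum_congr rfl fun d _ => ?_
  congr 1
  rw [Fintype.prod_sum_type]
  simp [Fin.prod_univ_two]

lemma avgPoly_totalDegree {n t : ℕ} (f : MvPolynomial (Fin n ⊕ Fin 2) ℝ)
    (hf : f.totalDegree ≤ t) : (avgPoly f).totalDegree ≤ t := by
  refine le_trans (MvPolynomial.totalDegree_finset_sum _ _) ?_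
  refine Finset.sup_le fun d hd => ?_
  refine le_trans (MvPolynomial.totalDegree_monomial_le _ _) ?_
  refine le_trans ?_ (le_trans (MvPolynomial.le_totalDegree hd) hf)
  rw [Finsupp.sum_fintype _ _ (fun _ => rfl), Finsupp.sum_fintype _ _ (fun _ => rfl)]
  rw [Fintype.sum_sum_type]
  simp only [Finsupp.comapDomain_apply, id_eq]
  exact Nat.le_add_right _ _

lemma avgPoly_eval_eq {n : ℕ} (f : MvPolynomial (Fin n ⊕ Fin 2) ℝ) (x : Fin n → ℝ) :
    eval x (avgPoly f) = ∑ d ∈ f.support, coeff d f *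
      ((∏ i : Fin n, x i ^ d (Sum.inl i)) * circCoeff (d (Sum.inr 0)) (d (Sum.inr 1))) := by
  rw [avgPoly, map_sum]
  refine Finset.sum_congr rfl fun d _ => ?_
  rw [eval_monomial, Finsupp.prod_pow]
  simp only [Finsupp.comapDomain_apply]
  ring

lemma avgPoly_eval {n : ℕ} (f : MvPolynomial (Fin n ⊕ Fin 2) ℝ) (x : Fin n → ℝ) :
    eval x (avgPoly f) =
      (2*π)⁻¹ * ∫ θ in (0:ℝ)..(2*π), eval (Sum.elim x ![Real.cos θ, Real.sin θ]) f := by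
  have hint : ∀ d : (Fin n ⊕ Fin 2) →₀ ℕ, IntervalIntegrable
      (fun θ => coeff d f * ((∏ i : Fin n, x i ^ d (Sum.inl i)) *
        ((Real.cos θ) ^ d (Sum.inr 0) * (Real.sin θ) ^ d (Sum.inr 1)))) volume 0 (2*π) := by
    intro d
    apply Continuous.intervalIntegrable
    fun_prop
  rw [avgPoly_eval_eq]
  rw [intervalIntegral.integral_congr
    (fun θ _ => eval_sum_elim f x (Real.cos θ) (Real.sin θ)),
    intervalIntegral.integral_finset_sum (fun d _ => hint d), Finset.mul_sum]
  refine Finset.sum_congr rfl fun d _ => ?_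
  rw [intervalIntegral.integral_const_mul, intervalIntegral.integral_const_mul,
    circCoeff]
  ring

lemma degree_pair_le {n t : ℕ} {f : MvPolynomial (Fin n ⊕ Fin 2) ℝ} (hf : f.totalDegree ≤ t)
    {d : (Fin n ⊕ Fin 2) →₀ ℕ} (hd : d ∈ f.support) :
    d (Sum.inr 0) + d (Sum.inr 1) ≤ t := by
  refine le_trans ?_ (le_trans (MvPolynomial.le_totalDegree hd) hf)
  rw [Finsupp.sum_fintype _ _ (fun _ => rfl), Fintype.sum_sum_type]
  calc d (Sum.inr 0) + d (Sum.inr 1) = ∑ i : Fin 2, d (Sum.inr i) := by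
        rw [Fin.sum_univ_two]
    _ ≤ _ := Nat.le_add_left _ _

lemma avgPoly_quad {n t : ℕ} (f : MvPolynomial (Fin n ⊕ Fin 2) ℝ) (hf : f.totalDegree ≤ t)
    (x : Fin n → ℝ) (u : ℝ) :
    ((t:ℝ)+1)⁻¹ * ∑ k ∈ range (t+1),
      eval (Sum.elim x
        ![Real.cos (2*π*((u+k)/(t+1))), Real.sin (2*π*((u+k)/(t+1)))]) f
    = eval x (avgPoly f) := by
  rw [Finset.sum_congr rfl (fun k _ => eval_sum_elim f x _ _), Finset.sum_comm,
    Finset.mul_sum, avgPoly_eval_eq]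
  refine Finset.sum_congr rfl fun d hd => ?_
  have hab := degree_pair_le hf hd
  rw [circCoeff, ← trig_quad t _ _ hab u]
  simp only [Finset.mul_sum]
  refine Finset.sum_congr rfl fun k _ => ?_
  ring

/-! ### The derivative of the product curve -/

def pcDeriv (n t : ℕ) (α : ℝ → EuclideanSpace ℝ (Fin n)) (s : ℝ) :
    EuclideanSpace ℝ (Fin n ⊕ Fin 2) :=
  (WithLp.equiv 2 (Fin n ⊕ Fin 2 → ℝ)).symm
    (Sum.elim (WithLp.equiv 2 (Fin n → ℝ)
        (((t:ℝ)+1) • deriv α (Int.fract ((t + 1 : ℝ) * s))))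
      ![-(2*π) * Real.sin (2*π*s), (2*π) * Real.cos (2*π*s)])

lemma beta_hasDerivAt {n : ℕ} {α : ℝ → EuclideanSpace ℝ (Fin n)} {T : ℝ}
    (hdiff : ∀ u ∈ Set.Icc (0:ℝ) 1, DifferentiableAt ℝ α u)
    {s : ℝ} (hs : Int.fract (T * s) ≠ 0) :
    HasDerivAt (fun s' => α (Int.fract (T * s')))
      (T • deriv α (Int.fract (T * s))) s := by
  set u := Int.fract (T * s) with hu
  set k := ⌊T * s⌋ with hk
  have hu01 : u ∈ Set.Icc (0:ℝ) 1 :=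
    ⟨Int.fract_nonneg _, le_of_lt (Int.fract_lt_one _)⟩
  have hα : HasDerivAt α (deriv α u) u := (hdiff u hu01).hasDerivAt
  have hinner : HasDerivAt (fun s' : ℝ => T * s' - k) T s := by
    simpa using ((hasDerivAt_id s).const_mul T).sub_const (k:ℝ)
  have heq : T * s - k = u := by rw [hu, hk]; exact Int.self_sub_floor _
  have hα' : HasDerivAt α (deriv α u) (T * s - k) := by rw [heq]; exact hα
  have hcomp : HasDerivAt (fun s' => α (T * s' - k)) (T • deriv α u) s := by
    have := HasDerivAt.scomp (𝕜 := ℝ) s hα' hinner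
    exact this
  refine hcomp.congr_of_eventuallyEq ?_
  have hopen : IsOpen {s' : ℝ | T * s' ∈ Set.Ioo (k:ℝ) (k+1)} :=
    (isOpen_Ioo).preimage (by continuity)
  have hmem : s ∈ {s' : ℝ | T * s' ∈ Set.Ioo (k:ℝ) (k+1)} := by
    constructor
    · rcases lt_or_eq_of_le (Int.floor_le (T*s)) with h | h
      · exact h
      · exfalso; apply hs; rw [hu, ← Int.self_sub_floor, ← h]; simp
    · exact Int.lt_floor_add_one _
  filter_upwards [hopen.mem_nhds hmem] with s' hs'
  have : ⌊T * s'⌋ = k := by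
    rw [Int.floor_eq_iff]
    exact ⟨le_of_lt hs'.1, by exact_mod_cast hs'.2⟩
  rw [← Int.self_sub_floor, this]

lemma productCurve_hasDerivAt {n t : ℕ} {α : ℝ → EuclideanSpace ℝ (Fin n)}
    (hdiff : ∀ u ∈ Set.Icc (0:ℝ) 1, DifferentiableAt ℝ α u)
    {s : ℝ} (hs : Int.fract (((t:ℝ)+1) * s) ≠ 0) :
    HasDerivAt (productCurve n t α) (pcDeriv n t α s) s := by
  have hβ := beta_hasDerivAt (T := (t:ℝ)+1) hdiff hs
  set D := deriv α (Int.fract (((t:ℝ)+1) * s)) with hD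
  set g : ℝ → (Fin n ⊕ Fin 2 → ℝ) := fun s' =>
    Sum.elim (WithLp.equiv 2 (Fin n → ℝ) (α (Int.fract (((t:ℝ)+1) * s'))))
      ![Real.cos (2 * π * s'), Real.sin (2 * π * s')] with hg
  set w : Fin n ⊕ Fin 2 → ℝ :=
    Sum.elim (WithLp.equiv 2 (Fin n → ℝ) (((t:ℝ)+1) • D))
      ![-(2*π) * Real.sin (2*π*s), (2*π) * Real.cos (2*π*s)] with hw
  have hgd : HasDerivAt g w s := by
    rw [hasDerivAt_pi]
    rintro (j | iv)
    · have h := (EuclideanSpace.proj (𝕜 := ℝ) j).hasFDerivAt.comp_hasDerivAt s hβ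
      simpa [hg, hw, Function.comp_def, EuclideanSpace.proj,
        WithLp.equiv_apply] using h
    · have hin : HasDerivAt (fun s' : ℝ => 2 * π * s') (2*π) s := by
        have := HasDerivAt.const_mul (2*π) (hasDerivAt_id s)
        simpa using this
      fin_cases iv
      · have h := (Real.hasDerivAt_cos (2*π*s)).comp s hin
        simp only [Function.comp_def] at h
        have h' : HasDerivAt (fun s' => Real.cos (2*π*s')) (-(2*π) * Real.sin (2*π*s)) s := by
          exact h.congr_deriv (by ring)
        simpa [hg, hw] using h'
      · have h := (Real.hasDerivAt_sin (2*π*s)).comp s hin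
        simp only [Function.comp_def] at h
        have h' : HasDerivAt (fun s' => Real.sin (2*π*s')) ((2*π) * Real.cos (2*π*s)) s := by
          exact h.congr_deriv (by ring)
        simpa [hg, hw] using h'
  have := (PiLp.continuousLinearEquiv 2 ℝ (fun _ : Fin n ⊕ Fin 2 => ℝ)).symm
    |>.toContinuousLinearMap.hasFDerivAt.comp_hasDerivAt s hgd
  exact this

lemma pcDeriv_norm {n t : ℕ} {α : ℝ → EuclideanSpace ℝ (Fin n)} {L : ℝ}
    {s : ℝ} (hn : ‖deriv α (Int.fract (((t:ℝ)+1) * s))‖ = L) :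
    ‖pcDeriv n t α s‖ = Real.sqrt ((((t:ℝ)+1)*L)^2 + (2*π)^2) := by
  set D := deriv α (Int.fract (((t:ℝ)+1) * s)) with hD
  have hsum : ∑ j : Fin n, D j ^ 2 = L^2 := by
    have h1 : ‖D‖^2 = L^2 := by rw [hn]
    rw [EuclideanSpace.norm_eq] at h1
    rw [← h1, Real.sq_sqrt (by positivity)]
    refine Finset.sum_congr rfl fun j _ => ?_
    rw [Real.norm_eq_abs, sq_abs]
  rw [pcDeriv, EuclideanSpace.norm_eq]
  congr 1
  rw [Fintype.sum_sum_type]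
  have h2 : ∀ j : Fin n, ‖(WithLp.equiv 2 (Fin n ⊕ Fin 2 → ℝ)).symm
      (Sum.elim (WithLp.equiv 2 (Fin n → ℝ) (((t:ℝ)+1) • D))
        ![-(2*π) * Real.sin (2*π*s), (2*π) * Real.cos (2*π*s)]) (Sum.inl j)‖^2
      = (((t:ℝ)+1))^2 * D j ^2 := by
    intro j
    rw [Real.norm_eq_abs, sq_abs]
    have : ((WithLp.equiv 2 (Fin n ⊕ Fin 2 → ℝ)).symm
        (Sum.elim (WithLp.equiv 2 (Fin n → ℝ) (((t:ℝ)+1) • D))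
          ![-(2*π) * Real.sin (2*π*s), (2*π) * Real.cos (2*π*s)])) (Sum.inl j)
        = ((t:ℝ)+1) * D j := by
      simp [WithLp.equiv_apply, PiLp.smul_apply, smul_eq_mul]
    rw [this]
    ring
  rw [Finset.sum_congr rfl (fun j _ => h2 j), ← Finset.mul_sum, hsum, Fin.sum_univ_two]
  simp only [Real.norm_eq_abs, sq_abs]
  have hcs : (-(2*π) * Real.sin (2*π*s))^2 + ((2*π) * Real.cos (2*π*s))^2 = (2*π)^2 := by
    have := Real.sin_sq_add_cos_sq (2*π*s)
    nlinarith [this]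
  calc ((t:ℝ)+1)^2 * L^2 +
      (((WithLp.equiv 2 (Fin n ⊕ Fin 2 → ℝ)).symm
      (Sum.elim (WithLp.equiv 2 (Fin n → ℝ) (((t:ℝ)+1) • D))
        ![-(2*π) * Real.sin (2*π*s), (2*π) * Real.cos (2*π*s)]) (Sum.inr 0))^2 +
      ((WithLp.equiv 2 (Fin n ⊕ Fin 2 → ℝ)).symm
      (Sum.elim (WithLp.equiv 2 (Fin n → ℝ) (((t:ℝ)+1) • D))
        ![-(2*π) * Real.sin (2*π*s), (2*π) * Real.cos (2*π*s)]) (Sum.inr 1))^2)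
      = ((t:ℝ)+1)^2 * L^2 +
        ((-(2*π) * Real.sin (2*π*s))^2 + ((2*π) * Real.cos (2*π*s))^2) := by
        rfl
    _ = (((t:ℝ)+1)*L)^2 + (2*π)^2 := by rw [hcs]; ring

/-! ### Continuity helpers and interval splitting -/

lemma contOn_eval {σ : Type*} [Fintype σ] (f : MvPolynomial σ ℝ) {v : ℝ → σ → ℝ} {S : Set ℝ}
    (hv : ∀ i, ContinuousOn (fun s => v s i) S) :
    ContinuousOn (fun s => eval (v s) f) S := by
  have h : (fun s => eval (v s) f)
      = fun s => ∑ d ∈ f.support, coeff d f * ∏ i, v s i ^ d i :=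
    funext fun s => by rw [eval_eq']
  rw [h]
  refine continuousOn_finset_sum _ fun d _ => ?_
  refine ContinuousOn.mul continuousOn_const ?_
  exact continuousOn_finset_prod _ fun i _ => (hv i).pow _

def Hfun (n t : ℕ) (α : ℝ → EuclideanSpace ℝ (Fin n))
    (f : MvPolynomial (Fin n ⊕ Fin 2) ℝ) : ℝ → ℝ := fun s =>
  eval (Sum.elim (WithLp.equiv 2 (Fin n → ℝ) (α (Int.fract (((t:ℝ) + 1) * s))))
    ![Real.cos (2*π*s), Real.sin (2*π*s)]) f

def Gf (n t : ℕ) (α : ℝ → EuclideanSpace ℝ (Fin n))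
    (f : MvPolynomial (Fin n ⊕ Fin 2) ℝ) (k : ℕ) : ℝ → ℝ := fun u =>
  eval (Sum.elim (WithLp.equiv 2 (Fin n → ℝ) (α u))
    ![Real.cos (2*π*((u+k)/((t:ℝ)+1))), Real.sin (2*π*((u+k)/((t:ℝ)+1)))]) f

lemma contOn_comp_eval {n : ℕ} {α : ℝ → EuclideanSpace ℝ (Fin n)}
    (hcont : ContinuousOn α (Set.Icc (0:ℝ) 1))
    (f : MvPolynomial (Fin n ⊕ Fin 2) ℝ) {S : Set ℝ} {w : ℝ → ℝ} {c : ℝ → ℝ}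
    (hw : ContinuousOn w S) (hc : Continuous c) (hmaps : Set.MapsTo w S (Set.Icc 0 1)) :
    ContinuousOn (fun s => eval (Sum.elim (WithLp.equiv 2 (Fin n → ℝ) (α (w s)))
      ![Real.cos (c s), Real.sin (c s)]) f) S := by
  refine contOn_eval f ?_
  rintro (j | iv)
  · have h1 : ContinuousOn (fun s => α (w s)) S := hcont.comp hw hmaps
    have h2 : Continuous (fun y : EuclideanSpace ℝ (Fin n) =>
        (WithLp.equiv 2 (Fin n → ℝ)) y j) :=
      (continuous_apply j).comp (PiLp.continuousLinearEquiv 2 ℝ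
        (fun _ : Fin n => ℝ)).continuous
    exact h2.comp_continuousOn h1
  · fin_cases iv
    · exact ((Real.continuous_cos).comp hc).continuousOn
    · exact ((Real.continuous_sin).comp hc).continuousOn

lemma fract_bad_zero {T : ℝ} (hT : T ≠ 0) :
    (volume : Measure ℝ) {s : ℝ | Int.fract (T * s) = 0} = 0 := by
  have hsub : {s : ℝ | Int.fract (T * s) = 0} ⊆ Set.range (fun m : ℤ => (m:ℝ) / T) := by
    intro s hs
    have h1 : T * s - ⌊T * s⌋ = 0 := by
      rw [Int.self_sub_floor]; exact hs
    exact ⟨⌊T * s⌋, by field_simp; linarith⟩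
  exact measure_mono_null hsub ((Set.countable_range _).measure_zero _)

lemma fract_ae {T : ℝ} (hT : T ≠ 0) : ∀ᵐ s : ℝ, Int.fract (T * s) ≠ 0 := by
  rw [MeasureTheory.ae_iff]
  simpa using fract_bad_zero hT

open intervalIntegral in
lemma step_split {n t : ℕ} (α : ℝ → EuclideanSpace ℝ (Fin n))
    (hcont : ContinuousOn α (Set.Icc (0:ℝ) 1))
    (f : MvPolynomial (Fin n ⊕ Fin 2) ℝ) :
    ∫ s in (0:ℝ)..1, Hfun n t α f s
      = ((t:ℝ)+1)⁻¹ * ∑ k ∈ range (t+1), ∫ u in (0:ℝ)..1, Gf n t α f k u := by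
  have hT : (0:ℝ) < (t:ℝ)+1 := by positivity
  have hTne : ((t:ℝ)+1) ≠ 0 := ne_of_gt hT
  set a : ℕ → ℝ := fun k => k / ((t:ℝ)+1) with ha
  have hale : ∀ k : ℕ, a k ≤ a (k+1) := by
    intro k
    show (k:ℝ)/((t:ℝ)+1) ≤ ((k+1:ℕ):ℝ)/((t:ℝ)+1)
    gcongr
    push_cast; linarith
  -- the local substitute functions
  set Hk : ℕ → ℝ → ℝ := fun k s =>
    eval (Sum.elim (WithLp.equiv 2 (Fin n → ℝ) (α (((t:ℝ)+1)*s - k)))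
      ![Real.cos (2*π*s), Real.sin (2*π*s)]) f with hHk
  have hmaps : ∀ k : ℕ, Set.MapsTo (fun s => ((t:ℝ)+1)*s - k)
      (Set.Icc (a k) (a (k+1))) (Set.Icc 0 1) := by
    intro k s hs
    simp only [ha, Set.mem_Icc] at hs
    obtain ⟨h1, h2⟩ := hs
    simp only [Set.mem_Icc]
    rw [div_le_iff₀ hT] at h1
    have h2' : s ≤ ((k:ℝ)+1) / ((t:ℝ)+1) := by push_cast at h2 ⊢; linarith
    rw [le_div_iff₀ hT] at h2'
    constructor <;> nlinarith
  have hcontk : ∀ k : ℕ, ContinuousOn (Hk k) (Set.Icc (a k) (a (k+1))) := by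
    intro k
    rw [hHk]
    exact contOn_comp_eval hcont f
      (by fun_prop) (by fun_prop) (hmaps k)
  have haeq : ∀ k : ℕ, ∀ᵐ s : ℝ, s ∈ Set.uIoc (a k) (a (k+1)) →
      Hfun n t α f s = Hk k s := by
    intro k
    filter_upwards [fract_ae hTne] with s hs hI
    rw [Set.uIoc_of_le (hale k)] at hI
    have h1 : (k:ℝ) < ((t:ℝ)+1) * s := by
      have := hI.1
      rw [ha, div_lt_iff₀ hT] at this
      linarith
    have h2 : ((t:ℝ)+1) * s ≤ (k:ℝ) + 1 := by
      have := hI.2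
      rw [ha, le_div_iff₀ hT] at this
      push_cast at this
      linarith
    have h3 : ((t:ℝ)+1) * s < (k:ℝ) + 1 := by
      rcases lt_or_eq_of_le h2 with h | h
      · exact h
      · exfalso
        apply hs
        rw [h]
        have : ((k:ℝ) + 1) = ((k+1 : ℤ) : ℝ) := by push_cast; ring
        rw [this, Int.fract_intCast]
    have hfl : ⌊((t:ℝ)+1) * s⌋ = (k:ℤ) := by
      rw [Int.floor_eq_iff]
      constructor
      · exact_mod_cast h1.le
      · exact_mod_cast h3
    have hfr : Int.fract (((t:ℝ)+1) * s) = ((t:ℝ)+1)*s - (k:ℕ) := by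
      rw [← Int.self_sub_floor, hfl]; push_cast; ring
    simp only [Hfun, hHk]
    rw [hfr]
  have hInt : ∀ k < t + 1, IntervalIntegrable (Hfun n t α f) volume (a k) (a (k+1)) := by
    intro k _
    have h1 : IntervalIntegrable (Hk k) volume (a k) (a (k+1)) := by
      apply ContinuousOn.intervalIntegrable
      rw [Set.uIcc_of_le (hale k)]
      exact hcontk k
    refine h1.congr_ae ?_
    have h2 : ∀ᵐ s ∂(volume.restrict (Set.uIoc (a k) (a (k+1)))),
        Hfun n t α f s = Hk k s :=
      (ae_restrict_iff' measurableSet_uIoc).2 (haeq k)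
    filter_upwards [h2] with s hs
    exact (hs).symm
  have ha0 : a 0 = 0 := by rw [ha]; simp
  have ha1 : a (t+1) = 1 := by rw [ha]; push_cast; field_simp
  calc ∫ s in (0:ℝ)..1, Hfun n t α f s
      = ∫ s in (a 0)..(a (t+1)), Hfun n t α f s := by rw [ha0, ha1]
    _ = ∑ k ∈ range (t+1), ∫ s in (a k)..(a (k+1)), Hfun n t α f s :=
        (sum_integral_adjacent_intervals hInt).symm
    _ = ∑ k ∈ range (t+1), ((t:ℝ)+1)⁻¹ * ∫ u in (0:ℝ)..1, Gf n t α f k u := by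
        refine Finset.sum_congr rfl fun k _ => ?_
        rw [intervalIntegral.integral_congr_ae (haeq k)]
        have hsub := intervalIntegral.integral_comp_mul_add (a := (0:ℝ)) (b := 1)
          (Hk k) (c := (((t:ℝ)+1))⁻¹) (inv_ne_zero hTne) (a k)
        have he0 : (((t:ℝ)+1))⁻¹ * 0 + a k = a k := by ring
        have he1 : (((t:ℝ)+1))⁻¹ * 1 + a k = a (k+1) := by
          show (((t:ℝ)+1))⁻¹ * 1 + (k:ℝ)/((t:ℝ)+1) = ((k+1:ℕ):ℝ)/((t:ℝ)+1)
          push_cast; field_simp; try ring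
        rw [he0, he1] at hsub
        have hptw : ∀ u : ℝ, Hk k ((((t:ℝ)+1))⁻¹ * u + a k) = Gf n t α f k u := by
          intro u
          simp only [hHk, Gf]
          have harg1 : ((t:ℝ)+1) * ((((t:ℝ)+1))⁻¹ * u + a k) - k = u := by
            simp only [ha]; field_simp; ring
          have harg2 : 2*π*((((t:ℝ)+1))⁻¹ * u + a k) = 2*π*((u + k)/((t:ℝ)+1)) := by
            simp only [ha]; field_simp; try ring
          rw [harg1, harg2]
        rw [intervalIntegral.integral_congr (fun u _ => hptw u)] at hsub
        rw [hsub, inv_inv, smul_eq_mul, ← mul_assoc, inv_mul_cancel₀ hTne, one_mul]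
    _ = ((t:ℝ)+1)⁻¹ * ∑ k ∈ range (t+1), ∫ u in (0:ℝ)..1, Gf n t α f k u := by
        rw [Finset.mul_sum]

end DesignAux

open Finset in
/-- if `α` is a constant-speed `t`-design curve on a compact measure space
`(K ⊂ ℝ^n, μ)`, then `γ(s) = (α((t+1)s - ⌊(t+1)s⌋), cos 2πs, sin 2πs)` is a `t`-design
curve on `(K × S¹, μ × σ)`, `σ` the arc-length measure on `S¹`. -/
theorem productCurve_is_design (n t : ℕ) (K : Set (EuclideanSpace ℝ (Fin n)))
    (μ : Measure (EuclideanSpace ℝ (Fin n))) (hK : IsCompact K)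
    (α : ℝ → EuclideanSpace ℝ (Fin n))
    (hmem : ∀ s ∈ Set.Icc (0:ℝ) 1, α s ∈ K)
    (hcont : ContinuousOn α (Set.Icc (0:ℝ) 1))
    (hclosed : α 0 = α 1)
    (L : ℝ) (hL : 0 < L)
    (hspeed : ∀ s ∈ Set.Icc (0:ℝ) 1, ‖deriv α s‖ = L)
    (hdesign : ∀ f : MvPolynomial (Fin n) ℝ, f.totalDegree ≤ t →
      (∫ s in (0:ℝ)..1, ‖deriv α s‖)⁻¹ *
          ∫ s in (0:ℝ)..1, eval (WithLp.equiv 2 (Fin n → ℝ) (α s)) f * ‖deriv α s‖ =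
        ((μ K).toReal)⁻¹ * ∫ x in K, eval (WithLp.equiv 2 (Fin n → ℝ) x) f ∂μ) :
    ∀ f : MvPolynomial (Fin n ⊕ Fin 2) ℝ, f.totalDegree ≤ t →
      (∫ s in (0:ℝ)..1, ‖deriv (productCurve n t α) s‖)⁻¹ *
          ∫ s in (0:ℝ)..1,
            eval (WithLp.equiv 2 (Fin n ⊕ Fin 2 → ℝ) (productCurve n t α s)) f *
            ‖deriv (productCurve n t α) s‖ =
        ((μ K).toReal * (2 * π))⁻¹ *
          ∫ x in K, (∫ θ in (0:ℝ)..(2 * π),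
            eval (Sum.elim (WithLp.equiv 2 (Fin n → ℝ) x)
              ![Real.cos θ, Real.sin θ]) f) ∂μ := by
  intro f hf
  have hT : (0:ℝ) < (t:ℝ)+1 := by positivity
  have hTne : ((t:ℝ)+1) ≠ 0 := ne_of_gt hT
  have h2π : (2*π : ℝ) ≠ 0 := by positivity
  -- differentiability of α on [0,1]
  have hdiff : ∀ u ∈ Set.Icc (0:ℝ) 1, DifferentiableAt ℝ α u := by
    intro u hu
    by_contra h
    have h1 := hspeed u hu
    rw [deriv_zero_of_not_differentiableAt h] at h1
    simp at h1
    exact absurd h1.symm (ne_of_gt hL)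
  -- constant speed of the product curve
  set M : ℝ := Real.sqrt ((((t:ℝ)+1)*L)^2 + (2*π)^2) with hM
  have hMpos : 0 < M := Real.sqrt_pos.2 (by positivity)
  have hnorm : ∀ s : ℝ, Int.fract (((t:ℝ)+1)*s) ≠ 0 →
      ‖deriv (productCurve n t α) s‖ = M := by
    intro s hs
    rw [(productCurve_hasDerivAt hdiff hs).deriv]
    exact pcDeriv_norm (hspeed _ ⟨Int.fract_nonneg _, (Int.fract_lt_one _).le⟩)
  have hInorm : ∫ s in (0:ℝ)..1, ‖deriv (productCurve n t α) s‖ = M := by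
    rw [intervalIntegral.integral_congr_ae (g := fun _ => M) ?_,
      intervalIntegral.integral_const]
    · simp
    · filter_upwards [fract_ae hTne] with s hs _
      exact hnorm s hs
  have hIprod : ∫ s in (0:ℝ)..1,
      eval (WithLp.equiv 2 (Fin n ⊕ Fin 2 → ℝ) (productCurve n t α s)) f *
        ‖deriv (productCurve n t α) s‖
      = (∫ s in (0:ℝ)..1, Hfun n t α f s) * M := by
    rw [intervalIntegral.integral_congr_ae (g := fun s => Hfun n t α f s * M) ?_,
      intervalIntegral.integral_mul_const]
    filter_upwards [fract_ae hTne] with s hs _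
    rw [hnorm s hs]
    simp only [Hfun, productCurve, Equiv.apply_symm_apply]
  -- integrability of the pieces G k
  have hGint : ∀ k ∈ range (t+1), IntervalIntegrable (Gf n t α f k) volume 0 1 := by
    intro k _
    apply ContinuousOn.intervalIntegrable
    rw [Set.uIcc_of_le zero_le_one]
    exact contOn_comp_eval hcont f continuousOn_id (by fun_prop)
      (fun s hs => hs)
  -- the averaged identity
  have hswap : ((t:ℝ)+1)⁻¹ * ∑ k ∈ range (t+1), ∫ u in (0:ℝ)..1, Gf n t α f k u
      = ∫ u in (0:ℝ)..1, eval (WithLp.equiv 2 (Fin n → ℝ) (α u)) (avgPoly f) := by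
    rw [← intervalIntegral.integral_finset_sum hGint, ← intervalIntegral.integral_const_mul]
    apply intervalIntegral.integral_congr
    intro u _
    simp only [Gf]
    exact avgPoly_quad f hf _ u
  -- apply the design property of α to the averaged polynomial
  have hLint : ∫ s in (0:ℝ)..1, ‖deriv α s‖ = L := by
    rw [intervalIntegral.integral_congr (g := fun _ => L) ?_,
      intervalIntegral.integral_const]
    · simp
    · intro s hs
      rw [Set.uIcc_of_le zero_le_one] at hs
      exact hspeed s hs
  have hFL : ∫ s in (0:ℝ)..1,
      eval (WithLp.equiv 2 (Fin n → ℝ) (α s)) (avgPoly f) * ‖deriv α s‖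
      = (∫ s in (0:ℝ)..1, eval (WithLp.equiv 2 (Fin n → ℝ) (α s)) (avgPoly f)) * L := by
    rw [intervalIntegral.integral_congr
      (g := fun s => eval (WithLp.equiv 2 (Fin n → ℝ) (α s)) (avgPoly f) * L) ?_,
      intervalIntegral.integral_mul_const]
    intro s hs
    rw [Set.uIcc_of_le zero_le_one] at hs
    simp only [hspeed s hs]
  have hd := hdesign (avgPoly f) (avgPoly_totalDegree f hf)
  rw [hLint, hFL] at hd
  have hd' : ∫ s in (0:ℝ)..1, eval (WithLp.equiv 2 (Fin n → ℝ) (α s)) (avgPoly f)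
      = ((μ K).toReal)⁻¹ *
        ∫ x in K, eval (WithLp.equiv 2 (Fin n → ℝ) x) (avgPoly f) ∂μ := by
    rw [← hd]
    field_simp
  -- rewrite the right-hand side
  have hptw : ∀ x : EuclideanSpace ℝ (Fin n),
      (∫ θ in (0:ℝ)..(2*π), eval (Sum.elim (WithLp.equiv 2 (Fin n → ℝ) x)
        ![Real.cos θ, Real.sin θ]) f)
      = (2*π) * eval (WithLp.equiv 2 (Fin n → ℝ) x) (avgPoly f) := by
    intro x
    rw [avgPoly_eval]
    field_simp
  have hRHS : ((μ K).toReal * (2*π))⁻¹ *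
      ∫ x in K, (∫ θ in (0:ℝ)..(2*π), eval (Sum.elim (WithLp.equiv 2 (Fin n → ℝ) x)
        ![Real.cos θ, Real.sin θ]) f) ∂μ
      = ((μ K).toReal)⁻¹ *
        ∫ x in K, eval (WithLp.equiv 2 (Fin n → ℝ) x) (avgPoly f) ∂μ := by
    simp only [hptw]
    rw [MeasureTheory.integral_const_mul, mul_inv]
    calc ((μ K).toReal)⁻¹ * (2*π)⁻¹ *
        ((2*π) * ∫ x in K, eval (WithLp.equiv 2 (Fin n → ℝ) x) (avgPoly f) ∂μ)
        = ((μ K).toReal)⁻¹ * ((2*π)⁻¹ * (2*π)) *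
          ∫ x in K, eval (WithLp.equiv 2 (Fin n → ℝ) x) (avgPoly f) ∂μ := by ring
      _ = _ := by rw [inv_mul_cancel₀ h2π, mul_one]
  rw [hInorm, hIprod, hRHS, ← hd', ← hswap, ← step_split α hcont f]
  field_simp
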